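/- Let M = (S, A, X, T, i) be a parametric MDP with induced POMDP M'. The function f : Runs_X → Runs' defined by f(x, s0·a0·s1·⋯) = (s0,x)·a0·(s1,x)·⋯ is an isomorphism of measurable spaces between (Runs_X, Cones_X) and (Runs', Cones'): f is a bijection and both f and f⁻¹ are measurable. -/

import Mathlib

open MeasureTheory ENNReal

namespace PMDPEncoding

universe u v w

variable {S : Type u} {A : Type v} {X : Type w}

/-- An infinite alternating sequence of state-action pairs
(the `k`-th pair consists of the `k`-th state and the `k`-th action of the run). -/
abbrev RunSeq (S : Type u) (A : Type v) := ℕ → S × A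

/-- `ρ` is a run of the MDP with transition function `T`:
all transitions have positive probability. -/
def IsRun (T : S → A → PMF S) (ρ : RunSeq S A) : Prop :=
  ∀ k, 0 < T (ρ k).1 (ρ k).2 (ρ (k + 1)).1

/-- A history: a finite list of state-action pairs followed by a final state. -/
abbrev Hist (S : Type u) (A : Type v) := List (S × A) × S

/-- The first state of a history. -/
def Hist.first (h : Hist S A) : S :=
  match h.1 with
  | [] => h.2
  | p :: _ => p.1

/-- Auxiliary for `IsHist`: validity of the list part of a history with final state `t`. -/
def IsHistL (T : S → A → PMF S) : List (S × A) → S → Prop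
  | [], _ => True
  | (s, a) :: rest, t => 0 < T s a (Hist.first (rest, t)) ∧ IsHistL T rest t

/-- `h` is a history (finite prefix of a run) of the MDP with transition function `T`. -/
def IsHist (T : S → A → PMF S) (h : Hist S A) : Prop := IsHistL T h.1 h.2

/-- The set of runs of the MDP with transition function `T`. -/
def Runs (T : S → A → PMF S) := {ρ : RunSeq S A // IsRun T ρ}

/-- The set of (raw) sequences having the history `h` as a prefix. -/
def ConeSeq (h : Hist S A) : Set (RunSeq S A) :=
  {ρ | (∀ k, (hk : k < h.1.length) → ρ k = h.1[k]'hk) ∧ (ρ h.1.length).1 = h.2}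

/-- The cone of a history: the set of runs with prefix `h`. -/
def Cone (T : S → A → PMF S) (h : Hist S A) : Set (Runs T) :=
  {ρ | ρ.1 ∈ ConeSeq h}

/-- The σ-algebra on runs generated by the cones of histories. -/
instance conesAlg (T : S → A → PMF S) : MeasurableSpace (Runs T) :=
  MeasurableSpace.generateFrom {C | ∃ h : Hist S A, IsHist T h ∧ C = Cone T h}

/-- Valid histories of an MDP, as a subtype. -/
def HistOf (T : S → A → PMF S) := {h : Hist S A // IsHist T h}

/-- Auxiliary function for the probability of a cone:
`pre` is the prefix of the history processed so far. -/
noncomputable def coneProbAux (T : S → A → PMF S) (π : Hist S A → PMF A) :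
    List (S × A) → List (S × A) → S → ℝ≥0∞
  | _, [], _ => 1
  | pre, (s, a) :: rest, t =>
      π (pre, s) a * T s a (Hist.first (rest, t)) *
        coneProbAux T π (pre ++ [(s, a)]) rest t

/-- The probability `i(s₀) · ∏_{k<n} π(s₀a₀…s_k)(a_k) · T(s_k,a_k)(s_{k+1})` that the
induced measure of policy `π` and initial distribution `i` assigns to the cone of a history. -/
noncomputable def coneProb (T : S → A → PMF S) (i : PMF S) (π : Hist S A → PMF A)
    (h : Hist S A) : ℝ≥0∞ :=
  i h.first * coneProbAux T π [] h.1 h.2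

/-- The evaluated transition function `T_x` of a pMDP at parameter point `x`. -/
def evalT (T : S → A → X → PMF S) (x : X) : S → A → PMF S := fun s a => T s a x

/-- Runs of a pMDP: pairs `(x, ρ)` of a parameter value `x` and a run `ρ` of `M(x)`. -/
def RunsX (T : S → A → X → PMF S) := {q : X × RunSeq S A // IsRun (evalT T q.1) q.2}

/-- Valid histories of a pMDP: pairs `(x, h)` with `h` a history of `M(x)`. -/
def HistX (T : S → A → X → PMF S) := {q : X × Hist S A // IsHist (evalT T q.1) q.2}

/-- The generator set `{x} × Cone(h)` of the σ-algebra on the runs of a pMDP. -/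
def ConeX (T : S → A → X → PMF S) (x : X) (h : Hist S A) : Set (RunsX T) :=
  {q | q.1.1 = x ∧ q.1.2 ∈ ConeSeq h}

/-- The σ-algebra on the runs of a pMDP generated by the sets `{x} × Cone(h)`. -/
instance conesXAlg (T : S → A → X → PMF S) : MeasurableSpace (RunsX T) :=
  MeasurableSpace.generateFrom
    {C | ∃ (x : X) (h : Hist S A), IsHist (evalT T x) h ∧ C = ConeX T x h}

/-- The transition function `T'` of the induced POMDP of a pMDP:
`T'((s,x),a)(s',x') = T(s,a)(x)(s') · δ_x(x')`. -/
noncomputable def indT (T : S → A → X → PMF S) : S × X → A → PMF (S × X) :=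
  fun sx a => (T sx.1 a sx.2).map fun s' => (s', sx.2)

/-- The observation function of the induced POMDP: `O(s,x) = s`. -/
def obs : S × X → S := Prod.fst

/-- The observation map extended to histories of the induced POMDP. -/
def obsHist : Hist (S × X) A → Hist S A :=
  fun h => (h.1.map fun p => (p.1.1, p.2), h.2.1)

/-- The map `f` on raw sequences: `f(x, s₀·a₀·s₁·⋯) = (s₀,x)·a₀·(s₁,x)·⋯`. -/
def fSeq (x : X) (ρ : RunSeq S A) : RunSeq (S × X) A :=
  fun k => (((ρ k).1, x), (ρ k).2)

theorem indT_pos {T : S → A → X → PMF S} {s s' : S} {a : A} {x : X}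
    (h : 0 < T s a x s') : 0 < indT T (s, x) a (s', x) := by
  have hmem : (s', x) ∈ ((T s a x).map fun u => (u, x)).support := by
    rw [PMF.support_map]
    exact ⟨s', (PMF.mem_support_iff _ _).2 h.ne', rfl⟩
  exact pos_iff_ne_zero.mpr ((PMF.mem_support_iff _ _).1 hmem)

/-- The map `f : Runs_X → Runs'` from the runs of a pMDP to the runs of its induced POMDP. -/
def fRun (T : S → A → X → PMF S) (q : RunsX T) : Runs (indT T) :=
  ⟨fSeq q.1.1 q.1.2, fun k => indT_pos (q.2 k)⟩

/-- The map `f` on raw histories: `f(x, s₀·a₀·⋯·s_n) = (s₀,x)·a₀·⋯·(s_n,x)`. -/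
def fHistSeq (x : X) (h : Hist S A) : Hist (S × X) A :=
  (h.1.map fun p => ((p.1, x), p.2), (h.2, x))

theorem isHist_fHistSeq (T : S → A → X → PMF S) (x : X) :
    ∀ (l : List (S × A)) (t : S), IsHist (evalT T x) (l, t) →
      IsHist (indT T) (fHistSeq x (l, t))
  | [], _, _ => trivial
  | (s, a) :: rest, t, hv => by
      obtain ⟨h1, h2⟩ := hv
      have hrec := isHist_fHistSeq T x rest t h2
      refine ⟨?_, hrec⟩
      show 0 < indT T (s, x) a (Hist.first ((rest.map fun p => ((p.1, x), p.2)), (t, x)))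
      have hfirst : Hist.first ((rest.map fun p => ((p.1, x), p.2) : List ((S × X) × A)), (t, x)) =
          (Hist.first (rest, t), x) := by
        cases rest <;> rfl
      rw [hfirst]
      exact indT_pos h1

/-- The map `f : Hist_X → Hist'` from the histories of a pMDP to the histories of
its induced POMDP. -/
def fHistX (T : S → A → X → PMF S) (q : HistX T) : HistOf (indT T) :=
  ⟨fHistSeq q.1.1 q.1.2, isHist_fHistSeq T q.1.1 q.1.2.1 q.1.2.2 q.2⟩

/-- Some run of an MDP: start anywhere, always pick a fixed action, and follow the
support of the transition distributions. -/
noncomputable def someRunSeq (T : S → A → PMF S) (sa : S × A) (a : A) : RunSeq S A :=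
  fun k => Nat.rec sa (fun _ ih => ((PMF.support_nonempty (T ih.1 ih.2)).some, a)) k

theorem someRunSeq_isRun (T : S → A → PMF S) (sa : S × A) (a : A) :
    IsRun T (someRunSeq T sa a) := by
  intro k
  exact pos_iff_ne_zero.mpr <| (PMF.mem_support_iff _ _).1 <|
    (PMF.support_nonempty (T (someRunSeq T sa a k).1 (someRunSeq T sa a k).2)).some_mem

instance instNonemptyRuns [Nonempty S] [Nonempty A] (T : S → A → PMF S) :
    Nonempty (Runs T) :=
  ⟨⟨someRunSeq T (Classical.arbitrary S, Classical.arbitrary A) (Classical.arbitrary A),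
    someRunSeq_isRun _ _ _⟩⟩

instance instNonemptyRunsX [Nonempty S] [Nonempty A] [Nonempty X] (T : S → A → X → PMF S) :
    Nonempty (RunsX T) :=
  ⟨⟨(Classical.arbitrary X,
      someRunSeq (evalT T (Classical.arbitrary X))
        (Classical.arbitrary S, Classical.arbitrary A) (Classical.arbitrary A)),
    someRunSeq_isRun _ _ _⟩⟩

instance instNonemptyHistX [Nonempty S] [Nonempty X] (T : S → A → X → PMF S) :
    Nonempty (HistX T) :=
  ⟨⟨(Classical.arbitrary X, ([], Classical.arbitrary S)), trivial⟩⟩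

instance instNonemptyHistOf [Nonempty S] (T : S → A → PMF S) :
    Nonempty (HistOf T) :=
  ⟨⟨([], Classical.arbitrary S), trivial⟩⟩

theorem indT_pos_elim {T : S → A → X → PMF S} {s s' : S} {a : A} {x x' : X}
    (h : 0 < indT T (s, x) a (s', x')) : x' = x ∧ 0 < T s a x s' := by
  have hmem : (s', x') ∈ ((T s a x).map fun u => (u, x)).support :=
    (PMF.mem_support_iff _ _).2 h.ne'
  rw [PMF.support_map] at hmem
  obtain ⟨u, hu, heq⟩ := hmem
  obtain ⟨h1, h2⟩ := Prod.mk.inj heq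
  subst h1; subst h2
  exact ⟨rfl, pos_iff_ne_zero.mpr ((PMF.mem_support_iff _ _).1 hu)⟩

theorem hist_first_strip (rest : List ((S × X) × A)) (t : S × X) :
    Hist.first ((rest.map fun p => (p.1.1, p.2)), t.1) = (Hist.first (rest, t)).1 := by
  cases rest <;> rfl

theorem isHistL_indT_elim (T : S → A → X → PMF S) :
    ∀ (l : List ((S × X) × A)) (t : S × X), IsHistL (indT T) l t →
      (∀ p ∈ l, p.1.2 = t.2) ∧
        IsHistL (evalT T t.2) (l.map fun p => (p.1.1, p.2)) t.1
  | [], _, _ => ⟨by simp, trivial⟩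
  | ((s, x), a) :: rest, t, hv => by
      obtain ⟨h1, h2⟩ := hv
      obtain ⟨hall, hrest⟩ := isHistL_indT_elim T rest t h2
      have h1' : 0 < indT T (s, x) a
          ((Hist.first (rest, t)).1, (Hist.first (rest, t)).2) := h1
      obtain ⟨hx2, hpos⟩ := indT_pos_elim h1'
      have hft : (Hist.first (rest, t)).2 = t.2 := by
        cases rest with
        | nil => rfl
        | cons p l => exact hall p List.mem_cons_self
      have hxt : x = t.2 := hx2 ▸ hft
      subst hxt
      refine ⟨?_, ?_, hrest⟩
      · rintro p hp
        rcases List.mem_cons.1 hp with rfl | hp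
        · rfl
        · exact hall p hp
      · show 0 < T s a t.2 (Hist.first ((rest.map fun p => (p.1.1, p.2)), t.1))
        rw [hist_first_strip]
        exact hpos

theorem fRun_preimage (T : S → A → X → PMF S) (x : X) (h : Hist S A) :
    fRun T ⁻¹' Cone (indT T) (fHistSeq x h) = ConeX T x h := by
  ext q
  simp only [Set.mem_preimage, Cone, ConeX, ConeSeq, Set.mem_setOf_eq, fRun, fHistSeq,
    List.length_map]
  constructor
  · rintro ⟨h1, h2⟩
    have h2' : ((q.1.2 h.1.length).1, q.1.1) = (h.2, x) := h2
    obtain ⟨hs, hx⟩ := Prod.mk.inj h2'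
    refine ⟨hx, fun k hk => ?_, hs⟩
    have hk1 := h1 k hk
    rw [List.getElem_map] at hk1
    have hk1' : (((q.1.2 k).1, q.1.1), (q.1.2 k).2) = ((h.1[k].1, x), h.1[k].2) := hk1
    obtain ⟨hp, ha⟩ := Prod.mk.inj hk1'
    obtain ⟨hp1, _⟩ := Prod.mk.inj hp
    exact Prod.ext hp1 ha
  · rintro ⟨hx, h1, h2⟩
    refine ⟨fun k hk => ?_, ?_⟩
    · rw [List.getElem_map]
      show (((q.1.2 k).1, q.1.1), (q.1.2 k).2) = ((h.1[k].1, x), h.1[k].2)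
      rw [h1 k hk, hx]
    · show ((q.1.2 h.1.length).1, q.1.1) = (h.2, x)
      rw [h2, hx]

theorem fRun_bijective (T : S → A → X → PMF S) : Function.Bijective (fRun T) := by
  constructor
  · rintro ⟨⟨x1, ρ1⟩, hr1⟩ ⟨⟨x2, ρ2⟩, hr2⟩ heq
    have hseq : fSeq x1 ρ1 = fSeq x2 ρ2 := congrArg Subtype.val heq
    have hx : x1 = x2 := congrArg (fun f => (f 0).1.2) hseq
    have hρ : ρ1 = ρ2 := by
      funext k
      have := congrArg (fun f => f k) hseq
      exact Prod.ext (congrArg (fun p => p.1.1) this) (congrArg (fun p => p.2) this)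
    subst hx; subst hρ; rfl
  · rintro ⟨r, hr⟩
    set x : X := (r 0).1.2 with hxdef
    have hconst : ∀ k, (r k).1.2 = x := by
      intro k
      induction k with
      | zero => rfl
      | succ n ih =>
        have hstep : 0 < indT T ((r n).1.1, (r n).1.2) (r n).2
            ((r (n + 1)).1.1, (r (n + 1)).1.2) := hr n
        exact (indT_pos_elim hstep).1.trans ih
    refine ⟨⟨(x, fun k => ((r k).1.1, (r k).2)), fun k => ?_⟩, ?_⟩
    · show 0 < T (r k).1.1 (r k).2 x (r (k + 1)).1.1
      have hstep : 0 < indT T ((r k).1.1, (r k).1.2) (r k).2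
          ((r (k + 1)).1.1, (r (k + 1)).1.2) := hr k
      rw [hconst k, hconst (k + 1)] at hstep
      exact (indT_pos_elim hstep).2
    · apply Subtype.ext
      funext k
      show (((r k).1.1, x), (r k).2) = r k
      rw [← hconst k]

/-- Let `M = (S, A, X, T, i)` be a parametric MDP with induced POMDP `M'`.
The function `f : Runs_X → Runs'` defined by `f(x, s₀·a₀·s₁·⋯) = (s₀,x)·a₀·(s₁,x)·⋯`
is an isomorphism of measurable spaces between `(Runs_X, Cones_X)` and `(Runs', Cones')`:
`f` is a bijection and both `f` and `f⁻¹` are measurable. -/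
theorem runs_measurable_iso [Nonempty S] [Nonempty A] [Nonempty X]
    (T : S → A → X → PMF S) :
    Function.Bijective (fRun T) ∧ Measurable (fRun T) ∧
      Measurable (Function.invFun (fRun T)) := by
  have hbij := fRun_bijective T
  have hri : Function.RightInverse (Function.invFun (fRun T)) (fRun T) :=
    Function.rightInverse_invFun hbij.2
  refine ⟨hbij, ?_, ?_⟩
  · -- Measurable fRun
    apply measurable_generateFrom
    rintro C ⟨h', hh', rfl⟩
    obtain ⟨l', t'⟩ := h'
    obtain ⟨hall, hstrip⟩ := isHistL_indT_elim T l' t' hh'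
    have hrepr : fHistSeq t'.2 ((l'.map fun p => (p.1.1, p.2)), t'.1) = (l', t') := by
      refine Prod.ext ?_ rfl
      show (l'.map fun p => (p.1.1, p.2)).map (fun p => ((p.1, t'.2), p.2)) = l'
      rw [List.map_map]
      conv_rhs => rw [← List.map_id l']
      apply List.map_congr_left
      intro p hp
      simp [Function.comp, ← hall p hp]
    rw [← hrepr, fRun_preimage]
    exact MeasurableSpace.measurableSet_generateFrom
      ⟨t'.2, ((l'.map fun p => (p.1.1, p.2)), t'.1),
        show IsHist (evalT T t'.2) ((l'.map fun p => (p.1.1, p.2)), t'.1) from hstrip, rfl⟩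
  · -- Measurable invFun
    apply measurable_generateFrom
    rintro C ⟨x, h, hh, rfl⟩
    have himg : Function.invFun (fRun T) ⁻¹' ConeX T x h
        = Cone (indT T) (fHistSeq x h) := by
      ext r
      constructor
      · intro hmem
        have : Function.invFun (fRun T) r ∈ fRun T ⁻¹' Cone (indT T) (fHistSeq x h) := by
          rw [fRun_preimage]; exact hmem
        simpa [hri r] using this
      · intro hmem
        have : Function.invFun (fRun T) r ∈ fRun T ⁻¹' Cone (indT T) (fHistSeq x h) := by
          simpa [hri r] using hmem
        rw [fRun_preimage] at this
        exact this
    rw [himg]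
    exact MeasurableSpace.measurableSet_generateFrom
      ⟨fHistSeq x h, isHist_fHistSeq T x h.1 h.2 hh, rfl⟩

end PMDPEncoding
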